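/- For p > 1 and odd j ≥ 1, the j-th sine Fourier coefficient of s_p(x) = sin_p(π_p x) satisfies ŝ_p(j) = (4/(jπ))·∫₀¹ cos((jπ/π_p)·F_p(t)) dt, and ŝ_p(j) = 0 for even j. -/

import Mathlib

open Real MeasureTheory Set intervalIntegral

noncomputable def pip (p : ℝ) : ℝ := 2 * π / (p * Real.sin (π / p))

noncomputable def Fp (p y : ℝ) : ℝ :=
  ∫ t in (0:ℝ)..y, (1 - t ^ p) ^ (-1 / p)

namespace SPAux

noncomputable def w (p t : ℝ) : ℝ := (1 - t ^ p) ^ (-1 / p)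

lemma Fp_eq (p y : ℝ) : Fp p y = ∫ t in (0:ℝ)..y, w p t := rfl

variable {p : ℝ}

lemma hp0 (hp : 1 < p) : 0 < p := lt_trans one_pos hp

lemma sinp_pos (hp : 1 < p) : 0 < Real.sin (π / p) :=
  Real.sin_pos_of_pos_of_lt_pi (by positivity)
    (by rw [div_lt_iff₀ (hp0 hp)]; nlinarith [pi_pos])

lemma pip_pos (hp : 1 < p) : 0 < pip p :=
  div_pos (by positivity) (mul_pos (hp0 hp) (sinp_pos hp))

lemma neg_inv_neg (hp : 1 < p) : -1 / p < 0 := by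
  apply div_neg_of_neg_of_pos (by norm_num) (hp0 hp)

lemma measurable_w (hp : 1 < p) : Measurable (w p) := by
  unfold w
  measurability

lemma w_nonneg (hp : 1 < p) {t : ℝ} (ht : t ∈ Icc (0:ℝ) 1) : 0 ≤ w p t := by
  rcases lt_or_eq_of_le ht.2 with h | h
  · have : 0 < 1 - t ^ p := by
      have : t ^ p < 1 := by
        rcases eq_or_lt_of_le ht.1 with h0 | h0
        · rw [← h0, Real.zero_rpow (hp0 hp).ne']; norm_num
        · exact Real.rpow_lt_one ht.1 h (hp0 hp)
      linarith
    exact (Real.rpow_pos_of_pos this _).le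
  · simp [w, h, Real.one_rpow, Real.zero_rpow (by simpa using (neg_inv_neg hp).ne : -1/p ≠ 0)]

lemma w_pos (hp : 1 < p) {t : ℝ} (ht : t ∈ Ico (0:ℝ) 1) : 0 < w p t := by
  have : 0 < 1 - t ^ p := by
    have : t ^ p < 1 := by
      rcases eq_or_lt_of_le ht.1 with h0 | h0
      · rw [← h0, Real.zero_rpow (hp0 hp).ne']; norm_num
      · exact Real.rpow_lt_one ht.1 ht.2 (hp0 hp)
    linarith
  exact Real.rpow_pos_of_pos this _

lemma w_contAt (hp : 1 < p) {t : ℝ} (ht : t ∈ Ico (0:ℝ) 1) : ContinuousAt (w p) t := by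
  have h1 : ContinuousAt (fun t : ℝ => 1 - t ^ p) t :=
    continuousAt_const.sub (Real.continuousAt_rpow_const t p (Or.inr (hp0 hp).le))
  have h2 : (0:ℝ) < 1 - t ^ p := by
    have : t ^ p < 1 := by
      rcases eq_or_lt_of_le ht.1 with h0 | h0
      · rw [← h0, Real.zero_rpow (hp0 hp).ne']; norm_num
      · exact Real.rpow_lt_one ht.1 ht.2 (hp0 hp)
    linarith
  exact h1.rpow_const (Or.inl h2.ne')

lemma w_intable (hp : 1 < p) : IntervalIntegrable (w p) volume 0 1 := by
  have hg : IntervalIntegrable (fun x : ℝ => (1 - x) ^ (-1/p)) volume 0 1 := by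
    have := (intervalIntegrable_rpow' (a := 0) (b := 1)
      (r := -1/p) (by rw [neg_div]; simpa using (inv_lt_one_of_one_lt₀ hp).trans_le le_rfl
        )).comp_sub_left 1
    simpa using this.symm
  apply hg.mono_fun ((measurable_w hp).aestronglyMeasurable)
  rw [uIoc_of_le (by norm_num : (0:ℝ) ≤ 1)]
  refine (ae_restrict_iff' measurableSet_Ioc).2 (ae_of_all _ ?_)
  intro t ht
  have ht0 : 0 ≤ t := le_of_lt ht.1
  have htp : t ^ p ≤ t := by
    rcases eq_or_lt_of_le ht0 with h0 | h0
    · rw [← h0, Real.zero_rpow (hp0 hp).ne']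
    · calc t ^ p ≤ t ^ (1:ℝ) :=
          Real.rpow_le_rpow_of_exponent_ge h0 ht.2 hp.le
        _ = t := Real.rpow_one t
  have hnn : 0 ≤ w p t := w_nonneg hp ⟨ht0, ht.2⟩
  show ‖w p t‖ ≤ ‖(1 - t) ^ (-1/p)‖
  rw [Real.norm_of_nonneg hnn, Real.norm_of_nonneg]
  · rcases lt_or_eq_of_le ht.2 with h | h
    · exact Real.rpow_le_rpow_of_nonpos (by linarith) (by linarith) (neg_inv_neg hp).le
    · simp [w, h, Real.one_rpow,
        Real.zero_rpow (by simpa using (neg_inv_neg hp).ne : -1/p ≠ 0)]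
  · rcases lt_or_eq_of_le ht.2 with h | h
    · exact (Real.rpow_pos_of_pos (by linarith) _).le
    · simp [h, Real.zero_rpow (by simpa using (neg_inv_neg hp).ne : -1/p ≠ 0)]

lemma w_intable' (hp : 1 < p) {a b : ℝ} (ha : a ∈ Icc (0:ℝ) 1) (hb : b ∈ Icc (0:ℝ) 1) :
    IntervalIntegrable (w p) volume a b :=
  (w_intable hp).mono_set (by rw [uIcc_of_le (by norm_num : (0:ℝ) ≤ 1)]; exact uIcc_subset_Icc ha hb)

lemma Fp_zero : Fp p 0 = 0 := integral_same

lemma Fp_contOn (hp : 1 < p) : ContinuousOn (Fp p) (Icc 0 1) := by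
  have := continuousOn_primitive_interval' (w_intable hp)
    (a := 0) (by simp [uIcc_of_le (by norm_num : (0:ℝ) ≤ 1)])
  rw [uIcc_of_le (by norm_num : (0:ℝ) ≤ 1)] at this
  exact fun x hx => ((this x hx).congr (fun y hy => (Fp_eq p y).symm ▸ rfl) (Fp_eq p x ▸ rfl))

lemma Fp_hasDeriv (hp : 1 < p) {t : ℝ} (ht : t ∈ Ioo (0:ℝ) 1) :
    HasDerivAt (Fp p) (w p t) t := by
  have h1 : IntervalIntegrable (w p) volume 0 t :=
    w_intable' hp (by norm_num) ⟨ht.1.le, ht.2.le⟩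
  have h2 : ContinuousAt (w p) t := w_contAt hp ⟨ht.1.le, ht.2⟩
  exact integral_hasDerivAt_right h1
    ((measurable_w hp).stronglyMeasurable.stronglyMeasurableAtFilter) h2

lemma Fp_sub (hp : 1 < p) {a b : ℝ} (ha : a ∈ Icc (0:ℝ) 1) (hb : b ∈ Icc (0:ℝ) 1) :
    Fp p b - Fp p a = ∫ t in a..b, w p t := by
  rw [Fp_eq, Fp_eq]
  rw [integral_interval_sub_left (w_intable' hp (by norm_num) hb) (w_intable' hp (by norm_num) ha)]

lemma Fp_strictMono (hp : 1 < p) : StrictMonoOn (Fp p) (Icc 0 1) := by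
  intro a ha b hb hab
  have h : 0 < ∫ t in a..b, w p t :=
    intervalIntegral_pos_of_pos_on (w_intable' hp ha hb)
      (fun t ht => w_pos hp ⟨le_trans ha.1 ht.1.le, lt_of_lt_of_le ht.2 hb.2⟩) hab
  have := Fp_sub hp ha hb
  linarith

lemma Fp_mono (hp : 1 < p) : MonotoneOn (Fp p) (Icc 0 1) := (Fp_strictMono hp).monotoneOn

lemma Fp_injOn (hp : 1 < p) : InjOn (Fp p) (Icc 0 1) := (Fp_strictMono hp).injOn

lemma beta_eqOn (hp : 1 < p) : EqOn
    (fun x : ℝ => (x:ℂ) ^ (((1/p : ℝ) : ℂ) - 1) * ((1:ℂ) - x) ^ (((1 - 1/p : ℝ) : ℂ) - 1))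
    (fun x : ℝ => ((x ^ (1/p - 1) * (1 - x) ^ (-1/p) : ℝ) : ℂ)) (Icc 0 1) := by
  intro x hx
  simp only
  rw [Complex.ofReal_mul]
  rw [Complex.ofReal_cpow hx.1, Complex.ofReal_cpow (by linarith [hx.2] : (0:ℝ) ≤ 1 - x)]
  push_cast
  norm_num
  left
  ring

lemma beta_int_complex (hp : 1 < p) :
    IntervalIntegrable
      (fun x : ℝ => (x:ℂ) ^ (((1/p : ℝ) : ℂ) - 1) * ((1:ℂ) - x) ^ (((1 - 1/p : ℝ) : ℂ) - 1))
      volume 0 1 := by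
  have hu : 0 < ((1/p : ℝ) : ℂ).re := by simp only [Complex.ofReal_re]; positivity
  have hv : 0 < ((1 - 1/p : ℝ) : ℂ).re := by
    simp only [Complex.ofReal_re]
    have := (inv_lt_one_of_one_lt₀ hp); rw [one_div]; linarith
  simpa using Complex.betaIntegral_convergent hu hv

lemma beta_intable (hp : 1 < p) :
    IntervalIntegrable (fun x : ℝ => x ^ (1/p - 1) * (1 - x) ^ (-1/p)) volume 0 1 := by
  have hC := beta_int_complex hp
  rw [intervalIntegrable_iff] at hC ⊢
  refine IntegrableOn.congr_fun hC.re ?_ measurableSet_uIoc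
  intro x hx
  rw [uIoc_of_le (by norm_num : (0:ℝ) ≤ 1)] at hx
  have := beta_eqOn hp ⟨hx.1.le, hx.2⟩
  simp only at this
  show ((x:ℂ) ^ (((1/p : ℝ) : ℂ) - 1) * ((1:ℂ) - x) ^ (((1 - 1/p : ℝ) : ℂ) - 1)).re = _
  rw [this, Complex.ofReal_re]

lemma beta_value (hp : 1 < p) :
    ∫ x in (0:ℝ)..1, x ^ (1/p - 1) * (1 - x) ^ (-1/p) = π / Real.sin (π / p) := by
  have hu : 0 < ((1/p : ℝ) : ℂ).re := by simp only [Complex.ofReal_re]; positivity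
  have hv : 0 < ((1 - 1/p : ℝ) : ℂ).re := by
    simp only [Complex.ofReal_re]
    have := (inv_lt_one_of_one_lt₀ hp); rw [one_div]; linarith
  have hBG := Complex.Gamma_mul_Gamma_eq_betaIntegral hu hv
  have hsum : ((1/p : ℝ) : ℂ) + ((1 - 1/p : ℝ) : ℂ) = 1 := by push_cast; ring
  rw [hsum, Complex.Gamma_one, one_mul] at hBG
  have hB : Complex.betaIntegral ((1/p : ℝ) : ℂ) ((1 - 1/p : ℝ) : ℂ)
      = ((∫ x in (0:ℝ)..1, x ^ (1/p - 1) * (1 - x) ^ (-1/p) : ℝ) : ℂ) := by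
    rw [Complex.betaIntegral]
    rw [intervalIntegral.integral_congr
      (g := fun x : ℝ => ((x ^ (1/p - 1) * (1 - x) ^ (-1/p) : ℝ) : ℂ))
      (by rw [uIcc_of_le (by norm_num : (0:ℝ) ≤ 1)]; exact beta_eqOn hp)]
    exact intervalIntegral.integral_ofReal
  have hG : Complex.Gamma ((1/p : ℝ) : ℂ) * Complex.Gamma ((1 - 1/p : ℝ) : ℂ)
      = ((π / Real.sin (π / p) : ℝ) : ℂ) := by
    rw [Complex.Gamma_ofReal, Complex.Gamma_ofReal, ← Complex.ofReal_mul]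
    congr 1
    have := Real.Gamma_mul_Gamma_one_sub (1/p)
    rw [this]
    congr 2
    rw [mul_one_div]
  rw [hG, hB] at hBG
  exact (Complex.ofReal_inj.mp hBG).symm

lemma subst_eqOn (hp : 1 < p) : EqOn (fun u : ℝ => (1/p * u ^ (1/p - 1)) • w p (u ^ (1/p)))
    (fun u : ℝ => (1/p) * (u ^ (1/p - 1) * (1 - u) ^ (-1/p))) (Icc 0 1) := by
  intro u hu
  have h : (u ^ (1/p : ℝ)) ^ p = u := by
    rw [← Real.rpow_mul hu.1, one_div, inv_mul_cancel₀ (hp0 hp).ne', Real.rpow_one]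
  simp only [smul_eq_mul, w, h, mul_assoc]

lemma Fp_one (hp : 1 < p) : Fp p 1 = pip p / 2 := by
  have hp' := hp0 hp
  have hsub := integral_comp_smul_deriv''' (a := (0:ℝ)) (b := 1)
    (f := fun u : ℝ => u ^ (1/p)) (f' := fun u : ℝ => 1/p * u ^ (1/p - 1)) (g := w p)
    ?_ ?_ ?_ ?_ ?_
  · have h0 : (0:ℝ) ^ (1/p : ℝ) = 0 := Real.zero_rpow (by positivity)
    have h1 : (1:ℝ) ^ (1/p : ℝ) = 1 := Real.one_rpow _
    rw [h0, h1] at hsub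
    rw [Fp_eq, ← hsub]
    rw [intervalIntegral.integral_congr
      (g := fun u : ℝ => (1/p) * (u ^ (1/p - 1) * (1 - u) ^ (-1/p)))
      (by rw [uIcc_of_le (by norm_num : (0:ℝ) ≤ 1)]; exact subst_eqOn hp)]
    rw [intervalIntegral.integral_const_mul, beta_value hp]
    rw [pip]
    have hs := (sinp_pos hp).ne'
    field_simp
  · intro x _
    exact (Real.continuousAt_rpow_const x (1/p) (Or.inr (by positivity))).continuousWithinAt
  · intro x hx
    simp only [min_self, min_eq_left, max_eq_right, zero_le_one] at hx
    exact ((Real.hasDerivAt_rpow_const (p := 1/p) (Or.inl hx.1.ne'))).hasDerivWithinAt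
  · intro y hy
    simp only [min_eq_left, max_eq_right, zero_le_one] at hy
    obtain ⟨u, hu, rfl⟩ := hy
    refine (w_contAt hp ⟨?_, ?_⟩).continuousWithinAt
    · exact (Real.rpow_pos_of_pos hu.1 _).le
    · exact Real.rpow_lt_one hu.1.le hu.2 (by positivity)
  · have himg : (fun u : ℝ => u ^ (1/p : ℝ)) '' (uIcc (0:ℝ) 1) ⊆ Icc 0 1 := by
      rw [uIcc_of_le (by norm_num : (0:ℝ) ≤ 1)]
      rintro y ⟨u, hu, rfl⟩
      exact ⟨Real.rpow_nonneg hu.1 _, Real.rpow_le_one hu.1 hu.2 (by positivity)⟩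
    have hI : IntegrableOn (w p) (Icc 0 1) volume := by
      have := w_intable hp
      rw [intervalIntegrable_iff'] at this
      simpa [uIcc_of_le (by norm_num : (0:ℝ) ≤ 1)] using this
    exact hI.mono_set himg
  · have hbase := ((beta_intable hp).const_mul (1/p))
    rw [intervalIntegrable_iff'] at hbase
    refine hbase.congr_fun ?_ measurableSet_uIcc
    rw [uIcc_of_le (by norm_num : (0:ℝ) ≤ 1)]
    intro u hu
    have := (subst_eqOn hp hu).symm
    simpa [mul_comm, mul_assoc, Function.comp] using this

lemma contOn_of_strictMono_surj {f : ℝ → ℝ} {a b : ℝ} (hab : a < b)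
    (hmono : StrictMonoOn f (Set.Icc a b))
    (hsurj : ∀ y ∈ Set.Icc (f a) (f b), ∃ x ∈ Set.Icc a b, f x = y) :
    ContinuousOn f (Set.Icc a b) := by
  have haI : a ∈ Set.Icc a b := by simp [hab.le]
  have hbI : b ∈ Set.Icc a b := by simp [hab.le]
  intro x hx
  have hright : x < b → ContinuousWithinAt f (Set.Ici x) x := by
    intro hxb
    refine StrictMonoOn.continuousWithinAt_right_of_exists_between hmono
      (Icc_mem_nhdsGE_of_mem ⟨hx.1, hxb⟩) ?_
    intro y hy
    have hfxb : f x < f b := hmono hx hbI hxb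
    have hfax : f a ≤ f x := hmono.monotoneOn haI hx hx.1
    obtain ⟨c, hc, hfc⟩ := hsurj (min y (f b))
      ⟨le_trans hfax (lt_min hy hfxb).le, min_le_right _ _⟩
    exact ⟨c, hc, by rw [hfc]; exact ⟨lt_min hy hfxb, min_le_left _ _⟩⟩
  have hleft : a < x → ContinuousWithinAt f (Set.Iic x) x := by
    intro hax
    refine StrictMonoOn.continuousWithinAt_left_of_exists_between hmono
      (Icc_mem_nhdsLE_of_mem ⟨hax, hx.2⟩) ?_
    intro y hy
    have hfax : f a < f x := hmono haI hx hax
    have hfxb : f x ≤ f b := hmono.monotoneOn hx hbI hx.2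
    obtain ⟨c, hc, hfc⟩ := hsurj (max y (f a))
      ⟨le_max_right _ _, le_trans (max_lt hy hfax).le hfxb⟩
    exact ⟨c, hc, by rw [hfc]; exact ⟨le_max_left _ _, max_lt hy hfax⟩⟩
  rcases eq_or_lt_of_le hx.2 with rfl | hxb
  · exact (hleft hab).mono (fun y hy => hy.2)
  · rcases eq_or_lt_of_le hx.1 with rfl | hax
    · exact (hright hxb).mono (fun y hy => hy.1)
    · refine ((hright hxb).union (hleft hax)).mono ?_
      intro y _
      rcases le_total x y with h | h
      · exact Or.inl h
      · exact Or.inr h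

end SPAux

open SPAux

theorem stmt_14 (p : ℝ) (hp : 1 < p) (s : ℝ → ℝ)
    (hinv : ∀ x ∈ Set.Icc (0:ℝ) (1/2), s x ∈ Set.Icc (0:ℝ) 1 ∧ Fp p (s x) = pip p * x)
    (hodd : ∀ x, s (-x) = -s x)
    (heven : ∀ x, s (1 - x) = s x)
    (hper : ∀ x, s (x + 2) = s x)
    (j : ℕ) :
    (2 * ∫ x in (0:ℝ)..1, s x * Real.sin (j * π * x)) =
      if Even j then 0
      else (4 / (j * π)) * ∫ t in (0:ℝ)..1, Real.cos ((j * π / pip p) * Fp p t) := by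
  have hpip := pip_pos hp
  have hsmem : ∀ x ∈ Icc (0:ℝ) (1/2), s x ∈ Icc (0:ℝ) 1 := fun x hx => (hinv x hx).1
  have hFs : ∀ x ∈ Icc (0:ℝ) (1/2), Fp p (s x) = pip p * x := fun x hx => (hinv x hx).2
  have h0I : (0:ℝ) ∈ Icc (0:ℝ) (1/2) := by norm_num
  have hhI : (1/2:ℝ) ∈ Icc (0:ℝ) (1/2) := by norm_num
  have h1I : (1:ℝ) ∈ Icc (0:ℝ) 1 := by norm_num
  have hs0 : s 0 = 0 := by have := hodd 0; simp at this; linarith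
  have hs_half : s (1/2) = 1 := by
    refine (Fp_strictMono hp).injOn (hsmem _ hhI) h1I ?_
    rw [hFs _ hhI, Fp_one hp]; ring
  have hmono : StrictMonoOn s (Icc (0:ℝ) (1/2)) := by
    intro x hx y hy hxy
    refine ((Fp_strictMono hp).lt_iff_lt (hsmem x hx) (hsmem y hy)).mp ?_
    rw [hFs x hx, hFs y hy]
    exact (mul_lt_mul_iff_right₀ hpip).2 hxy
  have hsurj : ∀ y ∈ Icc (s 0) (s (1/2)), ∃ x ∈ Icc (0:ℝ) (1/2), s x = y := by
    rw [hs0, hs_half]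
    intro y hy
    refine ⟨Fp p y / pip p, ⟨?_, ?_⟩, ?_⟩
    · apply div_nonneg _ hpip.le
      rw [← Fp_zero (p := p)]
      exact (Fp_strictMono hp).monotoneOn (by norm_num) hy hy.1
    · rw [div_le_iff₀ hpip]
      have : Fp p y ≤ Fp p 1 := (Fp_strictMono hp).monotoneOn hy h1I hy.2
      rw [Fp_one hp] at this; linarith
    · have hxI : Fp p y / pip p ∈ Icc (0:ℝ) (1/2) := by
        constructor
        · apply div_nonneg _ hpip.le
          rw [← Fp_zero (p := p)]
          exact (Fp_strictMono hp).monotoneOn (by norm_num) hy hy.1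
        · rw [div_le_iff₀ hpip]
          have : Fp p y ≤ Fp p 1 := (Fp_strictMono hp).monotoneOn hy h1I hy.2
          rw [Fp_one hp] at this; linarith
      refine (Fp_strictMono hp).injOn (hsmem _ hxI) hy ?_
      rw [hFs _ hxI, mul_div_cancel₀ _ hpip.ne']
  have hscont : ContinuousOn s (Icc (0:ℝ) (1/2)) :=
    contOn_of_strictMono_surj (by norm_num) hmono hsurj
  -- integrand and its interval integrability on [0,1/2]
  set f : ℝ → ℝ := fun x => s x * Real.sin (j * π * x) with hf
  have hfcont : ContinuousOn f (Icc (0:ℝ) (1/2)) :=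
    hscont.mul ((Real.continuous_sin.comp (continuous_const.mul continuous_id)).continuousOn)
  have hInt : IntervalIntegrable f volume 0 (1/2) := by
    apply ContinuousOn.intervalIntegrable
    rw [uIcc_of_le (by norm_num : (0:ℝ) ≤ 1/2)]
    exact hfcont
  -- reflection identity
  have hfun : ∀ x, f x = -(-1)^j * f (1 - x) := by
    intro x
    have h1 : s (1 - x) = s x := heven x
    simp only [hf]
    rw [h1]
    have : (j : ℝ) * π * (1 - x) = (j:ℝ) * π - (j:ℝ) * π * x := by ring
    rw [this, Real.sin_nat_mul_pi_sub]
    rcases Nat.even_or_odd j with h | h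
    · rw [h.neg_one_pow]; ring
    · rw [h.neg_one_pow]; ring
  have hint2 : IntervalIntegrable f volume (1/2) 1 := by
    have h1 : IntervalIntegrable (fun x => f (1 - x)) volume (1 - 0) (1 - 1/2) :=
      hInt.comp_sub_left 1
    replace h1 := h1.symm
    norm_num at h1
    have h2 := h1.const_mul (-(-1:ℝ)^j)
    have heq : (fun x => -(-1:ℝ)^j * f (1 - x)) = f := funext fun x => (hfun x).symm
    rwa [heq] at h2
  have hsplit : (∫ x in (0:ℝ)..1, f x) =
      (∫ x in (0:ℝ)..(1/2), f x) + ∫ x in (1/2:ℝ)..1, f x :=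
    (integral_add_adjacent_intervals hInt hint2).symm
  have hIrefl : (∫ x in (1/2:ℝ)..1, f x) = -(-1)^j * ∫ x in (0:ℝ)..(1/2), f x := by
    have e1 : (∫ x in (1/2:ℝ)..1, f x) = ∫ x in (1/2:ℝ)..1, -(-1)^j * f (1 - x) :=
      intervalIntegral.integral_congr (fun x _ => hfun x)
    rw [e1, intervalIntegral.integral_const_mul]
    congr 1
    have := intervalIntegral.integral_comp_sub_left (a := (1/2:ℝ)) (b := 1) f 1
    rw [this]
    norm_num
  by_cases hEven : Even j
  · rw [if_pos hEven, hsplit, hIrefl, hEven.neg_one_pow]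
    ring
  · rw [if_neg hEven]
    have hOdd : Odd j := Nat.odd_iff.mpr (Nat.not_even_iff.mp hEven)
    obtain ⟨m, hm⟩ := hOdd
    have hj0 : (j:ℝ) ≠ 0 := by
      have : j ≠ 0 := by omega
      exact_mod_cast this
    have hjπ : (j:ℝ) * π ≠ 0 := mul_ne_zero hj0 pi_ne_zero
    set c : ℝ := (j:ℝ) * π / pip p with hc
    -- K primitive
    set K : ℝ → ℝ := fun t => ∫ u in (0:ℝ)..t, Real.cos (c * Fp p u) with hK
    have hcosc : ContinuousOn (fun u => Real.cos (c * Fp p u)) (Icc (0:ℝ) 1) :=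
      Real.continuous_cos.comp_continuousOn (continuousOn_const.mul (Fp_contOn hp))
    have hKint : IntervalIntegrable (fun u => Real.cos (c * Fp p u)) volume 0 1 := by
      apply ContinuousOn.intervalIntegrable
      rw [uIcc_of_le (by norm_num : (0:ℝ) ≤ 1)]
      exact hcosc
    have hKcont : ContinuousOn K (Icc (0:ℝ) 1) := by
      have := continuousOn_primitive_interval' hKint
        (a := 0) (by simp [uIcc_of_le (by norm_num : (0:ℝ) ≤ 1)])
      rw [uIcc_of_le (by norm_num : (0:ℝ) ≤ 1)] at this
      exact this
    have hKderiv : ∀ t ∈ Ioo (0:ℝ) 1, HasDerivAt K (Real.cos (c * Fp p t)) t := by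
      intro t ht
      have hca : ∀ u ∈ Ioo (0:ℝ) 1, ContinuousAt (fun u => Real.cos (c * Fp p u)) u := by
        intro u hu
        exact Real.continuous_cos.continuousAt.comp
          (continuousAt_const.mul (Fp_hasDeriv hp hu).differentiableAt.continuousAt)
      refine integral_hasDerivAt_right
        (hKint.mono_set ?_) ?_ (hca t ht)
      · rw [uIcc_of_le (by norm_num : (0:ℝ) ≤ 1), uIcc_of_le ht.1.le]
        exact Icc_subset_Icc le_rfl ht.2.le
      · exact ContinuousAt.stronglyMeasurableAtFilter isOpen_Ioo hca t ht
    -- derivative of s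
    have hsx : ∀ x ∈ Ioo (0:ℝ) (1/2), s x ∈ Ioo (0:ℝ) 1 := by
      intro x hx
      constructor
      · rw [← hs0]; exact hmono h0I (Ioo_subset_Icc_self hx) hx.1
      · rw [← hs_half]; exact hmono (Ioo_subset_Icc_self hx) hhI hx.2
    have hsderiv : ∀ x ∈ Ioo (0:ℝ) (1/2),
        HasDerivAt s ((w p (s x) / pip p)⁻¹) x := by
      intro x hx
      have hcontx : ContinuousAt s x :=
        hscont.continuousAt (Icc_mem_nhds hx.1 hx.2)
      have hFd : HasDerivAt (fun y => Fp p y / pip p) (w p (s x) / pip p) (s x) :=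
        (Fp_hasDeriv hp (hsx x hx)).div_const _
      refine HasDerivAt.of_local_left_inverse hcontx hFd ?_ ?_
      · exact div_ne_zero (w_pos hp (Ioo_subset_Ico_self (hsx x hx))).ne' hpip.ne'
      · filter_upwards [Ioo_mem_nhds hx.1 hx.2] with y hy
        rw [hFs y (Ioo_subset_Icc_self hy), mul_div_cancel_left₀ _ hpip.ne']
    -- the big FTC
    set G : ℝ → ℝ := fun x => (K (s x) - s x * Real.cos ((j:ℝ) * π * x)) / ((j:ℝ) * π) with hG
    have hGcont : ContinuousOn G (Icc (0:ℝ) (1/2)) := by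
      apply ContinuousOn.div_const
      apply ContinuousOn.sub
      · exact hKcont.comp hscont hsmem
      · exact hscont.mul
          ((Real.continuous_cos.comp (continuous_const.mul continuous_id)).continuousOn)
    have hGderiv : ∀ x ∈ Ioo (0:ℝ) (1/2), HasDerivAt G (f x) x := by
      intro x hx
      set σ : ℝ := (w p (s x) / pip p)⁻¹ with hσ
      have h1 : HasDerivAt (fun x => K (s x)) (Real.cos (c * Fp p (s x)) * σ) x :=
        (hKderiv (s x) (hsx x hx)).comp x (hsderiv x hx)
      have harg : c * Fp p (s x) = (j:ℝ) * π * x := by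
        rw [hFs x (Ioo_subset_Icc_self hx), hc, div_mul_eq_mul_div, mul_comm (pip p) x,
          ← mul_assoc, mul_div_assoc, div_self hpip.ne', mul_one]
      rw [harg] at h1
      have hlin : HasDerivAt (fun y : ℝ => (j:ℝ) * π * y) ((j:ℝ) * π) x := by
        simpa using (hasDerivAt_id x).const_mul ((j:ℝ) * π)
      have h2 : HasDerivAt (fun x : ℝ => Real.cos ((j:ℝ) * π * x))
          (-Real.sin ((j:ℝ) * π * x) * ((j:ℝ) * π)) x :=
        (Real.hasDerivAt_cos ((j:ℝ) * π * x)).comp x hlin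
      have h3 : HasDerivAt (fun x => s x * Real.cos ((j:ℝ) * π * x))
          (σ * Real.cos ((j:ℝ) * π * x) + s x * (-Real.sin ((j:ℝ) * π * x) * ((j:ℝ) * π))) x :=
        (hsderiv x hx).mul h2
      have h4 := (h1.sub h3).div_const ((j:ℝ) * π)
      have : (Real.cos ((j:ℝ) * π * x) * σ -
          (σ * Real.cos ((j:ℝ) * π * x) + s x * (-Real.sin ((j:ℝ) * π * x) * ((j:ℝ) * π)))) /
          ((j:ℝ) * π) = f x := by
        field_simp [hf]
        ring
      rwa [this] at h4
    have hFTC := integral_eq_sub_of_hasDeriv_right_of_le (by norm_num : (0:ℝ) ≤ 1/2)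
      hGcont (fun x hx => (hGderiv x hx).hasDerivWithinAt) hInt
    -- evaluate G at endpoints
    have hcoshalf : Real.cos ((j:ℝ) * π * (1/2)) = 0 := by
      have : (j:ℝ) * π * (1/2) = (m:ℝ) * π + π / 2 := by
        rw [hm]; push_cast; ring
      rw [this, Real.cos_add, Real.cos_pi_div_two, Real.sin_pi_div_two,
        Real.sin_nat_mul_pi]
      ring
    have hK0 : K 0 = 0 := intervalIntegral.integral_same
    have hGhalf : G (1/2) = K 1 / ((j:ℝ) * π) := by
      rw [hG]; simp only; rw [hs_half, hcoshalf]; ring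
    have hG0 : G 0 = 0 := by
      rw [hG]; simp only; rw [hs0, hK0]; ring
    rw [hGhalf, hG0, sub_zero] at hFTC
    -- assemble
    rw [hsplit, hIrefl, (Nat.odd_iff.mpr (Nat.not_even_iff.mp hEven)).neg_one_pow]
    rw [show f = fun x => s x * Real.sin ((j:ℝ) * π * x) from rfl] at hFTC
    rw [hFTC]
    rw [hK]
    simp only
    field_simp
    ring
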